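/- Let G be a group, a : ℤ → G a sequence with a(m)*a(m+2) = a(m+1) for all m, and b₃, b₄ ∈ G satisfying: (i) a(m) * b₃ * a(m+2) = b₃ * a(m+1) * b₃ for all m; (ii) a(m) * b₄ = b₄ * a(m+1) for all m; (iii) b₃ * b₄ * b₃ = b₄ * b₃ * b₄. If b₃ and b₄ commute, then b₃ = b₄ = 1 and a(m) = 1 for all m. -/

import Mathlib

theorem stmt_6 (G : Type*) [Group G] (a : ℤ → G)
    (h : ∀ m : ℤ, a m * a (m + 2) = a (m + 1)) (b₃ b₄ : G)
    (h3 : ∀ m : ℤ, a m * b₃ * a (m + 2) = b₃ * a (m + 1) * b₃)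
    (h4 : ∀ m : ℤ, a m * b₄ = b₄ * a (m + 1))
    (hbr : b₃ * b₄ * b₃ = b₄ * b₃ * b₄)
    (hcomm : b₃ * b₄ = b₄ * b₃) :
    b₃ = 1 ∧ b₄ = 1 ∧ ∀ m : ℤ, a m = 1 := by
  have hb : b₃ = b₄ := by
    rw [hcomm] at hbr
    exact mul_left_cancel hbr
  have hab : ∀ m : ℤ, a m = b₃ := by
    intro m
    have e3 := h3 (m - 2)
    have e4 := h4 (m - 2)
    rw [← hb] at e4
    have hm : m - 2 + 2 = m := by ring
    have hm1 : m - 2 + 1 = m - 1 := by ring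
    rw [hm, hm1] at e3
    rw [hm1] at e4
    rw [e4] at e3
    exact mul_left_cancel e3
  have hb1 : b₃ = 1 := by
    have h0 := h 0
    rw [hab 0, hab (0+2), hab (0+1)] at h0
    exact mul_eq_left.mp h0
  exact ⟨hb1, hb ▸ hb1, fun m => by rw [hab m, hb1]⟩
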